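/- Let A and B be Archimedean semiprime f-algebras with point separating order duals and with weak order units e_A and e_B respectively, and let T : A → B be a weak Markov operator. If there exist elements 0 ≤ a₀ ∈ A and 0 ≤ b₀ ∈ B such that T(a ∧ a₀) = T(a) ∧ b₀ for all a ∈ A, then T is an extreme point of the convex set of all weak Markov operators from A to B. -/

import Mathlib

section RieszAux

variable {V : Type*} [AddCommGroup V] [Lattice V] [CovariantClass V V (· + ·) (· ≤ ·)]

lemma aux_pos_inf_neg (z : V) : (z ⊔ 0) ⊓ (-z ⊔ 0) = 0 := by
  set m := (z ⊔ 0) ⊓ (-z ⊔ 0) with hm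
  have h0 : 0 ≤ m := le_inf le_sup_right le_sup_right
  have h2 : -z ⊔ 0 = (z ⊔ 0) - z := by rw [sup_sub]; simp [sup_comm]
  have h1 : m ≤ (z ⊔ 0) - z := h2 ▸ inf_le_right
  have hz : z ≤ (z ⊔ 0) - m := by
    rw [le_sub_iff_add_le]
    rwa [le_sub_iff_add_le, add_comm] at h1
  have hz0 : (0 : V) ≤ (z ⊔ 0) - m := by
    rw [le_sub_iff_add_le, zero_add]; exact inf_le_left
  have hle : z ⊔ 0 ≤ (z ⊔ 0) - m := sup_le hz hz0
  rw [le_sub_iff_add_le] at hle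
  exact le_antisymm ((add_le_iff_nonpos_right _).mp hle) h0

lemma aux_inf_add_le {p q r : V} (hp : 0 ≤ p) (hq : 0 ≤ q) (hr : 0 ≤ r) :
    (p + q) ⊓ r ≤ p ⊓ r + q ⊓ r := by
  have s1 : (p + q) ⊓ r ≤ p ⊓ r + q := by
    have h := inf_le_inf_left (p + q) (le_add_of_nonneg_right hq : r ≤ r + q)
    rwa [← inf_add] at h
  have s2 : (p + q) ⊓ r ≤ p ⊓ r + r :=
    inf_le_right.trans (le_add_of_nonneg_left (le_inf hp hr))
  have h := le_inf s1 s2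
  rwa [← add_inf] at h

lemma aux_disj_add {p q r : V} (hp : 0 ≤ p) (hq : 0 ≤ q) (hr : 0 ≤ r)
    (h1 : p ⊓ r = 0) (h2 : q ⊓ r = 0) : (p + q) ⊓ r = 0 := by
  have key := aux_inf_add_le hp hq hr
  rw [h1, h2, add_zero] at key
  exact le_antisymm key (le_inf (add_nonneg hp hq) hr)

omit [CovariantClass V V (· + ·) (· ≤ ·)] in
lemma aux_abs_eq (z : V) : |z| = z ⊔ -z := rfl

omit [CovariantClass V V (· + ·) (· ≤ ·)] in
lemma aux_abs_le {z b : V} (h1 : z ≤ b) (h2 : -z ≤ b) : |z| ≤ b := sup_le h1 h2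

omit [CovariantClass V V (· + ·) (· ≤ ·)] in
lemma aux_le_abs (z : V) : z ≤ |z| := le_sup_left

omit [CovariantClass V V (· + ·) (· ≤ ·)] in
lemma aux_neg_le_abs (z : V) : -z ≤ |z| := le_sup_right

lemma aux_abs_of_nonneg {z : V} (h : 0 ≤ z) : |z| = z :=
  sup_eq_left.mpr ((neg_nonpos.mpr h).trans h)

lemma aux_abs_add (a b : V) : |a + b| ≤ |a| + |b| := by
  refine sup_le (add_le_add (aux_le_abs a) (aux_le_abs b)) ?_
  rw [neg_add]
  exact add_le_add (aux_neg_le_abs a) (aux_neg_le_abs b)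

lemma aux_sum_nonneg {f : ℕ → V} (hf : ∀ k, 0 ≤ f k) (m : ℕ) :
    0 ≤ ∑ k ∈ Finset.range m, f k := by
  induction m with
  | zero => simp
  | succ m ih =>
      rw [Finset.sum_range_succ]
      exact add_nonneg ih (hf m)

lemma aux_abs_sum (f : ℕ → V) (m : ℕ) :
    |∑ k ∈ Finset.range m, f k| ≤ ∑ k ∈ Finset.range m, |f k| := by
  induction m with
  | zero => simp
  | succ m ih =>
      rw [Finset.sum_range_succ, Finset.sum_range_succ]
      exact le_trans (by exact (aux_abs_add _ _)) (add_le_add_left ih _)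

section Smul
variable [Module ℝ V]

lemma aux_smul_mono (hsmul : ∀ (r : ℝ) (x : V), 0 ≤ r → 0 ≤ x → 0 ≤ r • x)
    {r : ℝ} (hr : 0 ≤ r) {x y : V} (h : x ≤ y) : r • x ≤ r • y := by
  have := hsmul r (y - x) hr (sub_nonneg.mpr h)
  rw [smul_sub, sub_nonneg] at this
  exact this

lemma aux_abs_nonneg (hsmul : ∀ (r : ℝ) (x : V), 0 ≤ r → 0 ≤ x → 0 ≤ r • x)
    (z : V) : 0 ≤ |z| := by
  have h2 : (0 : V) ≤ (2 : ℝ) • |z| := by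
    rw [two_smul]
    calc (0 : V) = z + -z := by abel
    _ ≤ |z| + |z| := add_le_add (aux_le_abs z) (aux_neg_le_abs z)
  have := hsmul ((2:ℝ)⁻¹) _ (by norm_num) h2
  rwa [smul_smul, inv_mul_cancel₀ (by norm_num : (2:ℝ) ≠ 0), one_smul] at this

lemma aux_smul_sup (hsmul : ∀ (r : ℝ) (x : V), 0 ≤ r → 0 ≤ x → 0 ≤ r • x)
    {r : ℝ} (hr : 0 < r) (x y : V) : r • (x ⊔ y) = r • x ⊔ r • y := by
  refine le_antisymm ?_ (sup_le (aux_smul_mono hsmul hr.le le_sup_left)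
    (aux_smul_mono hsmul hr.le le_sup_right))
  have h : x ⊔ y ≤ r⁻¹ • (r • x ⊔ r • y) := by
    refine sup_le ?_ ?_
    · have := aux_smul_mono hsmul (inv_nonneg.mpr hr.le) (le_sup_left : r • x ≤ r • x ⊔ r • y)
      rwa [smul_smul, inv_mul_cancel₀ hr.ne', one_smul] at this
    · have := aux_smul_mono hsmul (inv_nonneg.mpr hr.le) (le_sup_right : r • y ≤ r • x ⊔ r • y)
      rwa [smul_smul, inv_mul_cancel₀ hr.ne', one_smul] at this
  have h2 := aux_smul_mono hsmul hr.le h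
  rwa [smul_smul, mul_inv_cancel₀ hr.ne', one_smul] at h2

lemma aux_smul_disj (hsmul : ∀ (r : ℝ) (x : V), 0 ≤ r → 0 ≤ x → 0 ≤ r • x)
    {r : ℝ} (hr : 0 < r) {x y m : V} (h0 : 0 ≤ m)
    (hx : m ≤ r • x) (hy : m ≤ r • y) (hxy : x ⊓ y = 0) : m = 0 := by
  have h1 : r⁻¹ • m ≤ x := by
    have := aux_smul_mono hsmul (inv_nonneg.mpr hr.le) hx
    rwa [smul_smul, inv_mul_cancel₀ hr.ne', one_smul] at this
  have h2 : r⁻¹ • m ≤ y := by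
    have := aux_smul_mono hsmul (inv_nonneg.mpr hr.le) hy
    rwa [smul_smul, inv_mul_cancel₀ hr.ne', one_smul] at this
  have h3 : r⁻¹ • m ≤ 0 := hxy ▸ le_inf h1 h2
  have h4 : r • (r⁻¹ • m) ≤ r • (0 : V) := aux_smul_mono hsmul hr.le h3
  rw [smul_smul, mul_inv_cancel₀ hr.ne', one_smul, smul_zero] at h4
  exact le_antisymm h4 h0

/-- The key Archimedean + weak order unit lemma. -/
lemma aux_key {e c x : V}
    (harch : ∀ x y : V, (∀ n : ℕ, n • x ≤ y) → x ≤ 0)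
    (hwou : ∀ z : V, |z| ⊓ e = 0 → z = 0)
    (he : 0 ≤ e) (hc : 0 ≤ c) (hx : 0 ≤ x)
    (h : ∀ K : ℕ, x ≤ (c - (K : ℝ) • e) ⊔ 0) : x = 0 := by
  set d := x ⊓ e with hd
  have hd0 : 0 ≤ d := le_inf hx he
  have claim : ∀ m : ℕ, m • d ≤ c ⊓ ((m : ℝ) • e) := by
    intro m
    induction m with
    | zero => simpa using le_inf hc le_rfl
    | succ m ih =>
        have step : c ⊓ ((m : ℝ) • e) + d ≤ c ⊓ (((m : ℝ) + 1) • e) := by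
          refine le_inf ?_ ?_
          · have h1 : d ≤ (c - (m : ℝ) • e) ⊔ 0 := inf_le_left.trans (h m)
            have h2 : (c - (m : ℝ) • e) ⊔ 0 = c - c ⊓ ((m : ℝ) • e) := by
              rw [sub_inf, sub_self, sup_comm]
            rw [h2] at h1
            calc c ⊓ ((m : ℝ) • e) + d ≤ c ⊓ ((m : ℝ) • e) + (c - c ⊓ ((m : ℝ) • e)) :=
              add_le_add_right h1 _
            _ = c := by abel
          · calc c ⊓ ((m : ℝ) • e) + d ≤ (m : ℝ) • e + e :=
              add_le_add inf_le_right inf_le_right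
            _ = ((m : ℝ) + 1) • e := by rw [add_smul, one_smul]
        calc (m + 1) • d = m • d + d := succ_nsmul d m
        _ ≤ c ⊓ ((m : ℝ) • e) + d := add_le_add_left ih _
        _ ≤ c ⊓ (((m : ℝ) + 1) • e) := step
        _ = c ⊓ (((m + 1 : ℕ) : ℝ) • e) := by push_cast; ring_nf
  have hdc : ∀ m : ℕ, m • d ≤ c := fun m => (claim m).trans inf_le_left
  have hdeq : d = 0 := le_antisymm (harch d c hdc) hd0
  exact hwou x (by rwa [aux_abs_of_nonneg hx])

end Smul
end RieszAux

/-- If a weak Markov operator `T` between Archimedean semiprime `f`-algebras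
with point separating order duals and weak order units `e_A`, `e_B` satisfies
`T (a ⊓ a₀) = T a ⊓ b₀` for all `a`, for some fixed `0 ≤ a₀` and `0 ≤ b₀`,
then `T` is an extreme point of the set of all weak Markov operators. -/
theorem stmt_10
    {A B : Type*}
    [Ring A] [Lattice A] [Algebra ℝ A] [CovariantClass A A (· + ·) (· ≤ ·)]
    -- A is a Riesz space (vector lattice) over ℝ
    (hsmulA : ∀ (r : ℝ) (x : A), 0 ≤ r → 0 ≤ x → 0 ≤ r • x)
    -- A is a lattice-ordered algebra
    (hmulA : ∀ x y : A, 0 ≤ x → 0 ≤ y → 0 ≤ x * y)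
    -- the f-algebra condition
    (hfA : ∀ x y z : A, 0 ≤ z → x ⊓ y = 0 → (x * z) ⊓ y = 0 ∧ (z * x) ⊓ y = 0)
    -- A is Archimedean
    (harchA : ∀ x y : A, (∀ n : ℕ, n • x ≤ y) → x ≤ 0)
    -- the order dual of A separates the points of A
    (hsepA : ∀ x : A, x ≠ 0 → ∃ f : A →ₗ[ℝ] ℝ, Monotone f ∧ f x ≠ 0)
    -- A is semiprime
    (hsemiA : ∀ x : A, x * x = 0 → x = 0)
    [Ring B] [Lattice B] [Algebra ℝ B] [CovariantClass B B (· + ·) (· ≤ ·)]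
    -- B is a Riesz space (vector lattice) over ℝ
    (hsmulB : ∀ (r : ℝ) (x : B), 0 ≤ r → 0 ≤ x → 0 ≤ r • x)
    -- B is a lattice-ordered algebra
    (hmulB : ∀ x y : B, 0 ≤ x → 0 ≤ y → 0 ≤ x * y)
    -- the f-algebra condition
    (hfB : ∀ x y z : B, 0 ≤ z → x ⊓ y = 0 → (x * z) ⊓ y = 0 ∧ (z * x) ⊓ y = 0)
    -- B is Archimedean
    (harchB : ∀ x y : B, (∀ n : ℕ, n • x ≤ y) → x ≤ 0)
    -- the order dual of B separates the points of B
    (hsepB : ∀ x : B, x ≠ 0 → ∃ f : B →ₗ[ℝ] ℝ, Monotone f ∧ f x ≠ 0)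
    -- B is semiprime
    (hsemiB : ∀ x : B, x * x = 0 → x = 0)
    (eA : A) (eB : B)
    -- eA is a weak order unit of A
    (heApos : 0 < eA) (heAwou : ∀ x : A, |x| ⊓ eA = 0 → x = 0)
    -- eB is a weak order unit of B
    (heBpos : 0 < eB) (heBwou : ∀ x : B, |x| ⊓ eB = 0 → x = 0)
    (T : A →ₗ[ℝ] B)
    -- T is a weak Markov operator
    (hTpos : ∀ a : A, 0 ≤ a → 0 ≤ T a) (hTe : T eA = eB)
    (a₀ : A) (b₀ : B) (ha₀ : 0 ≤ a₀) (hb₀ : 0 ≤ b₀)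
    (hmin : ∀ a : A, T (a ⊓ a₀) = T a ⊓ b₀) :
    T ∈ Set.extremePoints ℝ {S : A →ₗ[ℝ] B | (∀ a : A, 0 ≤ a → 0 ≤ S a) ∧ S eA = eB} := by
  constructor
  · exact ⟨hTpos, hTe⟩
  rintro S₁ ⟨hS₁pos, hS₁e⟩ S₂ ⟨hS₂pos, hS₂e⟩ ⟨θ, β, hθ, hβ, hθβ, hsum⟩
  -- T is monotone
  have Tmono : ∀ {x y : A}, x ≤ y → T x ≤ T y := by
    intro x y h
    have h2 := hTpos (y - x) (sub_nonneg.mpr h)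
    rw [map_sub, sub_nonneg] at h2; exact h2
  -- b₀ = T a₀
  have hTa₀ : T a₀ = b₀ := by
    have h1 : T a₀ = T a₀ ⊓ b₀ := by have := hmin a₀; rwa [inf_idem] at this
    have hle : T a₀ ≤ b₀ := le_of_eq_of_le h1 inf_le_right
    have h2 : T a₀ = (T a₀ + eB) ⊓ b₀ := by
      have h := hmin (a₀ + eA)
      rwa [inf_eq_right.mpr (le_add_of_nonneg_right heApos.le), map_add, hTe] at h
    have h3 : (b₀ - T a₀) ⊓ eB = 0 := by
      have e1 : ((T a₀ + eB) ⊓ b₀) - T a₀ = eB ⊓ (b₀ - T a₀) := by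
        rw [inf_sub]; congr 1; abel
      rw [← h2, sub_self] at e1
      rw [inf_comm]; exact e1.symm
    have h4 : b₀ - T a₀ = 0 :=
      heBwou _ (by rwa [aux_abs_of_nonneg (sub_nonneg.mpr hle)])
    have := sub_eq_zero.mp h4
    exact this.symm
  -- T is an inf-homomorphism
  have Tinf : ∀ x y : A, T (x ⊓ y) = T x ⊓ T y := by
    intro x y
    have key : (x - y + a₀) ⊓ a₀ = x ⊓ y + (a₀ - y) := by
      calc (x - y + a₀) ⊓ a₀ = (x + (a₀ - y)) ⊓ (y + (a₀ - y)) := by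
            congr 1 <;> abel
        _ = x ⊓ y + (a₀ - y) := by rw [← inf_add]
    have h1 := hmin (x - y + a₀)
    rw [key, ← hTa₀, map_add, map_sub, map_add, map_sub] at h1
    have h2 : (T x - T y + T a₀) ⊓ T a₀ = T x ⊓ T y + (T a₀ - T y) := by
      calc (T x - T y + T a₀) ⊓ T a₀
          = (T x + (T a₀ - T y)) ⊓ (T y + (T a₀ - T y)) := by congr 1 <;> abel
        _ = T x ⊓ T y + (T a₀ - T y) := by rw [← inf_add]
    rw [h2] at h1
    exact add_right_cancel h1
  -- the constant and the difference operator
  set C : ℝ := θ⁻¹ with hC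
  have hθ1 : θ ≤ 1 := by linarith
  have hCpos : 0 < C := inv_pos.mpr hθ
  have hC1 : 1 ≤ C := by
    rw [hC, le_inv_comm₀ one_pos hθ, inv_one]; exact hθ1
  set D : A →ₗ[ℝ] B := S₁ - T with hD
  have hDapp : ∀ x : A, D x = S₁ x - T x := fun x => rfl
  have hDe : D eA = 0 := by rw [hDapp, hS₁e, hTe, sub_self]
  have hTθ : ∀ x : A, θ • S₁ x + β • S₂ x = T x := by
    intro x
    have h := congrArg (fun L : A →ₗ[ℝ] B => L x) hsum
    simpa using h
  have hbound : ∀ x : A, 0 ≤ x → S₁ x ≤ C • T x := by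
    intro x hx
    have h1 : θ • S₁ x ≤ T x := by
      rw [← hTθ x]; exact le_add_of_nonneg_right (hsmulB β _ hβ.le (hS₂pos x hx))
    have h2 := aux_smul_mono hsmulB (inv_nonneg.mpr hθ.le) h1
    rwa [smul_smul, inv_mul_cancel₀ hθ.ne', one_smul] at h2
  have hDabs : ∀ x : A, 0 ≤ x → |D x| ≤ C • T x := by
    intro x hx
    have hTx : 0 ≤ T x := hTpos x hx
    have hCTx : T x ≤ C • T x := by
      have h := hsmulB (C - 1) _ (by linarith) hTx
      rw [sub_smul, one_smul, sub_nonneg] at h; exact h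
    refine aux_abs_le ?_ ?_
    · rw [hDapp]
      exact (sub_le_iff_le_add).mpr ((hbound x hx).trans (le_add_of_nonneg_right hTx))
    · rw [hDapp, neg_sub]
      exact (sub_le_self _ (hS₁pos x hx)).trans hCTx
    -- the main claim: D vanishes on nonnegative elements
  have hDzero : ∀ a : A, 0 ≤ a → D a = 0 := by
    intro a ha
    have hTa : 0 ≤ T a := hTpos a ha
    -- step estimate
    have hstep : ∀ n K : ℕ, 0 < n →
        |D a| ≤ (C / (n : ℝ)) • eB + C • ((T a - (K : ℝ) • eB) ⊔ 0) := by
      intro n K hn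
      have hnR : (0 : ℝ) < (n : ℝ) := Nat.cast_pos.mpr hn
      set δ : ℝ := 1 / (n : ℝ) with hδdef
      have hδ : 0 < δ := by positivity
      set f : ℕ → A := fun k => a ⊓ (((k : ℝ) / (n : ℝ)) • eA) with hf
      set v : ℕ → A := fun k => f (k + 1) - f k with hv
      have hfk : ∀ k : ℕ, f k = a ⊓ (((k : ℝ) / (n : ℝ)) • eA) := fun k => by rw [hf]
      have hvk : ∀ k : ℕ, v k = f (k + 1) - f k := fun k => by rw [hv]
      have heA0 : (0 : A) ≤ eA := heApos.le
      have heB0 : (0 : B) ≤ eB := heBpos.le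
      have hmono : ∀ {t₁ t₂ : ℝ}, t₁ ≤ t₂ → a ⊓ (t₁ • eA) ≤ a ⊓ (t₂ • eA) := by
        intro t₁ t₂ h
        refine inf_le_inf_left a ?_
        have h2 := hsmulA (t₂ - t₁) eA (by linarith) heA0
        rw [sub_smul, sub_nonneg] at h2; exact h2
      have hcast : ∀ k : ℕ, ((k + 1 : ℕ) : ℝ) / (n : ℝ) = (k : ℝ) / (n : ℝ) + δ := by
        intro k; rw [hδdef]; push_cast; ring
      have hdivmono : ∀ {j k : ℕ}, j ≤ k → (j : ℝ) / (n : ℝ) ≤ (k : ℝ) / (n : ℝ) := by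
        intro j k h
        have hc : (j : ℝ) ≤ (k : ℝ) := by exact_mod_cast h
        gcongr
      have hv0 : ∀ k, 0 ≤ v k := by
        intro k
        rw [hvk k]
        exact sub_nonneg.mpr (by rw [hfk k, hfk (k+1)]; exact hmono (hdivmono (Nat.le_succ k)))
      have hshift : ∀ k : ℕ, f k + δ • eA = (a + δ • eA) ⊓ ((((k : ℝ) / (n : ℝ)) + δ) • eA) := by
        intro k
        rw [hfk k, inf_add, add_smul]
      have hδeA : (0 : A) ≤ δ • eA := hsmulA δ eA hδ.le heA0
      have hvle : ∀ k, v k ≤ δ • eA := by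
        intro k
        rw [hvk k, sub_le_iff_le_add, add_comm (δ • eA) (f k), hshift k, hfk (k+1), hcast k]
        exact inf_le_inf_right _ (le_add_of_nonneg_right hδeA)
      have hdisj : ∀ j k : ℕ, j < k → (δ • eA - v j) ⊓ v k = 0 := by
        intro j k hjk
        set μ : ℝ := ((j : ℝ) / (n : ℝ)) + δ with hμ
        have hp0 : 0 ≤ δ • eA - v j := sub_nonneg.mpr (hvle j)
        have hq0 : 0 ≤ v k := hv0 k
        have hfj1 : f (j + 1) = a ⊓ (μ • eA) := by rw [hfk (j+1), hcast j, hμ]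
        have hpb : δ • eA - v j ≤ (μ • eA - a) ⊔ 0 := by
          have e1 : δ • eA - v j = ((a + δ • eA) ⊓ (μ • eA)) - a ⊓ (μ • eA) := by
            rw [hvk j, hfj1, hμ, ← hshift j]
            abel
          rw [e1]
          refine le_trans (sub_le_sub_right inf_le_right _) ?_
          rw [sub_inf, sub_self, sup_comm]
        have hqb : v k ≤ (a - μ • eA) ⊔ 0 := by
          have e2 : v k ≤ a - f k := by
            rw [hvk k]
            exact sub_le_sub_right (by rw [hfk (k+1)]; exact inf_le_left) _
          have e3 : a - f k = (a - ((k : ℝ) / (n : ℝ)) • eA) ⊔ 0 := by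
            rw [hfk k, sub_inf, sub_self, sup_comm]
          have e4 : a - ((k : ℝ) / (n : ℝ)) • eA ≤ a - μ • eA := by
            refine sub_le_sub_left ?_ a
            have hμk : μ ≤ (k : ℝ) / (n : ℝ) := by
              rw [hμ, ← hcast j]
              exact hdivmono hjk
            have h5 := hsmulA ((k : ℝ) / (n : ℝ) - μ) eA (by linarith) heA0
            rw [sub_smul, sub_nonneg] at h5; exact h5
          rw [e3] at e2
          exact e2.trans (sup_le_sup_right e4 0)
        have hiz : ((μ • eA - a) ⊔ 0) ⊓ ((a - μ • eA) ⊔ 0) = 0 := by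
          have h6 := aux_pos_inf_neg (μ • eA - a)
          rwa [neg_sub] at h6
        refine le_antisymm ?_ (le_inf hp0 hq0)
        calc (δ • eA - v j) ⊓ v k ≤ ((μ • eA - a) ⊔ 0) ⊓ ((a - μ • eA) ⊔ 0) :=
              inf_le_inf hpb hqb
          _ = 0 := hiz
      -- images under T
      have hDv2 : ∀ k, |D (v k)| ≤ C • (δ • eB - T (v k)) := by
        intro k
        have hw0 : 0 ≤ δ • eA - v k := sub_nonneg.mpr (hvle k)
        have h1 := hDabs _ hw0
        have h2 : D (δ • eA - v k) = -(D (v k)) := by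
          rw [map_sub, map_smul, hDe, smul_zero, zero_sub]
        have h3 : T (δ • eA - v k) = δ • eB - T (v k) := by
          rw [map_sub, map_smul, hTe]
        rw [h2, abs_neg, h3] at h1
        exact h1
      have hDv1 : ∀ k, |D (v k)| ≤ C • T (v k) := fun k => hDabs _ (hv0 k)
      have hTdisj : ∀ j k : ℕ, j < k → (δ • eB - T (v j)) ⊓ T (v k) = 0 := by
        intro j k hjk
        have h3 : T (δ • eA - v j) = δ • eB - T (v j) := by
          rw [map_sub, map_smul, hTe]
        rw [← h3, ← Tinf, hdisj j k hjk, map_zero]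
      have habsnn : ∀ z : B, 0 ≤ |z| := aux_abs_nonneg hsmulB
      have hyd : ∀ j k : ℕ, j ≠ k → |D (v j)| ⊓ |D (v k)| = 0 := by
        intro j k hjk
        rcases lt_or_gt_of_ne hjk with h | h
        · exact aux_smul_disj hsmulB hCpos (le_inf (habsnn _) (habsnn _))
            (inf_le_left.trans (hDv2 j)) (inf_le_right.trans (hDv1 k)) (hTdisj j k h)
        · rw [inf_comm]
          exact aux_smul_disj hsmulB hCpos (le_inf (habsnn _) (habsnn _))
            (inf_le_left.trans (hDv2 k)) (inf_le_right.trans (hDv1 j)) (hTdisj k j h)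
      have hybound : ∀ k, |D (v k)| ≤ (C * δ) • eB := by
        intro k
        refine (hDv1 k).trans ?_
        have h1 : T (v k) ≤ δ • eB := by
          have h7 := Tmono (hvle k)
          rwa [map_smul, hTe] at h7
        have h2 := aux_smul_mono hsmulB hCpos.le h1
        rwa [smul_smul] at h2
      have hCδeB : (0 : B) ≤ (C * δ) • eB := hsmulB _ _ (by positivity) heB0
      have hsb : ∀ m : ℕ, (∑ k ∈ Finset.range m, |D (v k)|) ≤ (C * δ) • eB ∧
          ∀ j, m ≤ j → (∑ k ∈ Finset.range m, |D (v k)|) ⊓ |D (v j)| = 0 := by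
        intro m
        induction m with
        | zero =>
            constructor
            · rw [Finset.sum_range_zero]; exact hCδeB
            · intro j _
              rw [Finset.sum_range_zero]
              exact inf_eq_left.mpr (habsnn _)
        | succ m ih =>
            have hsum0 : 0 ≤ ∑ k ∈ Finset.range m, |D (v k)| :=
              aux_sum_nonneg (fun k => habsnn _) m
            constructor
            · rw [Finset.sum_range_succ]
              have hd0 : (∑ k ∈ Finset.range m, |D (v k)|) ⊓ |D (v m)| = 0 := ih.2 m le_rfl
              have he1 : (∑ k ∈ Finset.range m, |D (v k)|) + |D (v m)| =
                  (∑ k ∈ Finset.range m, |D (v k)|) ⊔ |D (v m)| := by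
                have h := inf_add_sup (∑ k ∈ Finset.range m, |D (v k)|) |D (v m)|
                rw [hd0, zero_add] at h
                exact h.symm
              rw [he1]
              exact sup_le ih.1 (hybound m)
            · intro j hj
              rw [Finset.sum_range_succ]
              exact aux_disj_add hsum0 (habsnn _) (habsnn _)
                (ih.2 j (le_trans (Nat.le_succ m) hj)) (hyd m j (by omega))
      -- telescoping
      have hf0 : f 0 = 0 := by
        rw [hfk 0, Nat.cast_zero, zero_div, zero_smul]
        exact inf_eq_right.mpr ha
      have hfnK : f (n * K) = a ⊓ ((K : ℝ) • eA) := by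
        have hc : ((n * K : ℕ) : ℝ) / (n : ℝ) = (K : ℝ) := by
          push_cast; field_simp
        rw [hfk (n * K), hc]
      have htel : ∑ k ∈ Finset.range (n * K), v k = a ⊓ ((K : ℝ) • eA) := by
        simp only [hvk]
        rw [Finset.sum_range_sub f, hf0, hfnK, sub_zero]
      have hra : a = (∑ k ∈ Finset.range (n * K), v k) + (a - a ⊓ ((K : ℝ) • eA)) := by
        rw [htel]; abel
      have hDsplit : D a = (∑ k ∈ Finset.range (n * K), D (v k)) + D (a - a ⊓ ((K : ℝ) • eA)) := by
        conv_lhs => rw [hra]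
        rw [map_add, map_sum]
      have hr0 : 0 ≤ a - a ⊓ ((K : ℝ) • eA) := sub_nonneg.mpr inf_le_left
      have hTr : T (a - a ⊓ ((K : ℝ) • eA)) = (T a - (K : ℝ) • eB) ⊔ 0 := by
        rw [map_sub, Tinf, map_smul, hTe, sub_inf, sub_self, sup_comm]
      have h2 : |D (a - a ⊓ ((K : ℝ) • eA))| ≤ C • ((T a - (K : ℝ) • eB) ⊔ 0) := by
        rw [← hTr]; exact hDabs _ hr0
      have h1 : |D a| ≤ (∑ k ∈ Finset.range (n * K), |D (v k)|) +
          |D (a - a ⊓ ((K : ℝ) • eA))| := by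
        rw [hDsplit]
        exact (aux_abs_add _ _).trans (add_le_add_left (aux_abs_sum _ _) _)
      have hfin : |D a| ≤ (C * δ) • eB + C • ((T a - (K : ℝ) • eB) ⊔ 0) :=
        h1.trans (add_le_add (hsb (n * K)).1 h2)
      have hCδ : C * δ = C / (n : ℝ) := by rw [hδdef]; ring
      rwa [hCδ] at hfin
    -- let n → ∞
    have hK : ∀ K : ℕ, |D a| ≤ C • ((T a - (K : ℝ) • eB) ⊔ 0) := by
      intro K
      set w : B := |D a| - C • ((T a - (K : ℝ) • eB) ⊔ 0) with hw
      have harchapp : ∀ m : ℕ, m • w ≤ C • eB := by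
        intro m
        rcases Nat.eq_zero_or_pos m with hm | hm
        · rw [hm, zero_smul]
          exact hsmulB C eB hCpos.le heBpos.le
        · have hmR : (0 : ℝ) < (m : ℝ) := Nat.cast_pos.mpr hm
          have hwle : w ≤ (C / (m : ℝ)) • eB := by
            rw [hw, sub_le_iff_le_add]
            exact hstep m K hm
          have h3 := aux_smul_mono hsmulB (le_of_lt hmR) hwle
          rw [smul_smul] at h3
          have h4 : (m : ℝ) * (C / (m : ℝ)) = C := by field_simp
          rw [h4, Nat.cast_smul_eq_nsmul] at h3
          exact h3
      have h5 := harchB w (C • eB) harchapp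
      rw [hw, sub_nonpos] at h5
      exact h5
    -- conclude by the key lemma
    have hK2 : ∀ K : ℕ, |D a| ≤ ((C • T a) - (K : ℝ) • eB) ⊔ 0 := by
      intro K
      refine (hK K).trans ?_
      rw [aux_smul_sup hsmulB hCpos, smul_zero, smul_sub, smul_smul]
      refine sup_le_sup_right (sub_le_sub_left ?_ _) 0
      have h6 := hsmulB (C * (K : ℝ) - (K : ℝ)) eB
        (by nlinarith [Nat.cast_nonneg (α := ℝ) K]) heBpos.le
      rw [sub_smul, sub_nonneg] at h6
      exact h6
    have habs0 : |D a| = 0 :=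
      aux_key harchB heBwou heBpos.le (hsmulB C _ hCpos.le hTa)
        (aux_abs_nonneg hsmulB _) hK2
    have hle1 : D a ≤ 0 := habs0 ▸ aux_le_abs (D a)
    have hle2 : -(D a) ≤ 0 := habs0 ▸ aux_neg_le_abs (D a)
    exact le_antisymm hle1 (by rwa [neg_nonpos] at hle2)
  -- D vanishes everywhere
  have hDall : ∀ a : A, D a = 0 := by
    intro a
    have hdec : a = (a ⊔ 0) - ((-a) ⊔ 0) := by
      have h : (-a) ⊔ 0 = (a ⊔ 0) - a := by rw [sup_sub]; simp [sup_comm]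
      rw [h]; abel
    rw [hdec, map_sub, hDzero _ le_sup_right, hDzero _ le_sup_right, sub_zero]
  have hS₁T : S₁ = T := by
    refine LinearMap.ext fun a => ?_
    have h := hDall a
    rw [hDapp] at h
    exact sub_eq_zero.mp h
  exact hS₁T
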